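/- Assume X ≠ ∅. Then {w ∈ ℝ^q : wᵀv ≤ 0 for every v ∈ Pᵀ[X^h] − C} = {w ∈ C⁺ : the scalarized objective wᵀPᵀx is bounded above on X}, where Pᵀ[X^h] − C = {Pᵀx − c : x ∈ X^h, c ∈ C}. (Since Pᵀ[X^h] − C is the recession cone of the lower image Pᵀ[X] − C, this says that the negative dual cone of the recession cone of the lower image consists exactly of those w ∈ C⁺ for which (P1(w)) is bounded.) -/

import Mathlib

open Matrix

/-- Farkas-type separation: if `c` is not in the cone generated by `v`, there is a
separating vector `d`. Proved by induction on the number of generators. -/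
lemma farkas_sep (N : ℕ) :
    ∀ (k : ℕ) (v : Fin k → (Fin N → ℝ)) (c : Fin N → ℝ),
      (¬ ∃ μ : Fin k → ℝ, (∀ i, 0 ≤ μ i) ∧ c = ∑ i, μ i • v i) →
      ∃ d : Fin N → ℝ, (∀ i, 0 ≤ d ⬝ᵥ v i) ∧ d ⬝ᵥ c < 0 := by
  intro k
  induction k with
  | zero =>
    intro v c h
    have hc : c ≠ 0 := by
      intro hc
      exact h ⟨0, fun i => le_refl 0, by simp [hc]⟩
    refine ⟨-c, fun i => i.elim0, ?_⟩
    have h1 : c ⬝ᵥ c ≠ 0 := fun h0 => hc (dotProduct_self_eq_zero.mp h0)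
    have h2 : 0 ≤ c ⬝ᵥ c := Finset.sum_nonneg fun i _ => mul_self_nonneg _
    have : 0 < c ⬝ᵥ c := lt_of_le_of_ne h2 (Ne.symm h1)
    simpa [neg_dotProduct] using this
  | succ k ih =>
    intro v c h
    set w : Fin k → Fin N → ℝ := fun i => v i.castSucc with hw
    set u := v (Fin.last k) with hu
    have hcw : ¬ ∃ μ : Fin k → ℝ, (∀ i, 0 ≤ μ i) ∧ c = ∑ i, μ i • w i := by
      rintro ⟨μ, hμ, hc⟩
      refine h ⟨Fin.snoc μ 0, ?_, ?_⟩
      · intro i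
        refine Fin.lastCases ?_ ?_ i
        · simp
        · intro j; simpa using hμ j
      · rw [Fin.sum_univ_castSucc]
        simp [hc]
        rfl
    obtain ⟨d, hd, hdc⟩ := ih w c hcw
    by_cases hdu : 0 ≤ d ⬝ᵥ u
    · exact ⟨d, fun i => Fin.lastCases hdu hd i, hdc⟩
    push_neg at hdu
    set D := d ⬝ᵥ u with hD
    have hDne : D ≠ 0 := ne_of_lt hdu
    set w' : Fin k → Fin N → ℝ := fun i => w i - (d ⬝ᵥ w i / D) • u with hw'
    set c' : Fin N → ℝ := c - (d ⬝ᵥ c / D) • u with hc'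
    have hc'w' : ¬ ∃ μ : Fin k → ℝ, (∀ i, 0 ≤ μ i) ∧ c' = ∑ i, μ i • w' i := by
      rintro ⟨μ, hμ, hsum⟩
      set γ : ℝ := (d ⬝ᵥ c - ∑ i, μ i * (d ⬝ᵥ w i)) / D with hγdef
      have hnum : d ⬝ᵥ c - ∑ i, μ i * (d ⬝ᵥ w i) ≤ 0 := by
        have : 0 ≤ ∑ i, μ i * (d ⬝ᵥ w i) :=
          Finset.sum_nonneg fun i _ => mul_nonneg (hμ i) (hd i)
        linarith
      have hγ : 0 ≤ γ := by
        rw [hγdef, div_nonneg_iff]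
        right
        exact ⟨hnum, le_of_lt hdu⟩
      refine h ⟨Fin.snoc μ γ, ?_, ?_⟩
      · intro i
        refine Fin.lastCases ?_ ?_ i
        · simpa using hγ
        · intro j; simpa using hμ j
      · rw [Fin.sum_univ_castSucc]
        simp only [Fin.snoc_castSucc, Fin.snoc_last, ← hw, ← hu]
        have hcc : c = ∑ i, μ i • w' i + (d ⬝ᵥ c / D) • u := by
          rw [← hsum, hc']; abel
        rw [hcc]
        have expand : ∑ i, μ i • w' i
            = ∑ i, μ i • w i - ((∑ i, μ i * (d ⬝ᵥ w i)) / D) • u := by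
          rw [hw']
          simp only [smul_sub, smul_smul]
          rw [Finset.sum_sub_distrib, ← Finset.sum_smul]
          have hsc : ∑ i, μ i * (d ⬝ᵥ w i / D) = (∑ i, μ i * (d ⬝ᵥ w i)) / D := by
            rw [Finset.sum_div]
            exact Finset.sum_congr rfl fun i _ => by ring
          rw [hsc]
        rw [expand, hγdef, sub_div, sub_smul]
        abel
    obtain ⟨d', hd', hd'c⟩ := ih w' c' hc'w'
    refine ⟨d' - (d' ⬝ᵥ u / D) • d, ?_, ?_⟩
    · intro i
      refine Fin.lastCases ?_ ?_ i
      · rw [← hu]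
        simp only [sub_dotProduct, smul_dotProduct, smul_eq_mul, ← hD]
        rw [div_mul_cancel₀ _ hDne]
        simp
      · intro j
        have := hd' j
        rw [hw'] at this
        simp only [dotProduct_sub, dotProduct_smul, smul_eq_mul, ← hD] at this
        simp only [sub_dotProduct, smul_dotProduct, smul_eq_mul, ← hw]
        have harith : d' ⬝ᵥ w j - d' ⬝ᵥ u / D * (d ⬝ᵥ w j)
            = d' ⬝ᵥ w j - d ⬝ᵥ w j / D * (d' ⬝ᵥ u) := by ring
        rw [harith]
        exact this
    · have := hd'c
      rw [hc'] at this
      simp only [dotProduct_sub, dotProduct_smul, smul_eq_mul, ← hD] at this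
      simp only [sub_dotProduct, smul_dotProduct, smul_eq_mul]
      have harith : d' ⬝ᵥ c - d' ⬝ᵥ u / D * (d ⬝ᵥ c)
          = d' ⬝ᵥ c - d ⬝ᵥ c / D * (d' ⬝ᵥ u) := by ring
      rw [harith]
      exact this

lemma sum_dotProduct' {k n : ℕ} (f : Fin k → Fin n → ℝ) (x : Fin n → ℝ) :
    (∑ i, f i) ⬝ᵥ x = ∑ i, f i ⬝ᵥ x := by
  simp only [dotProduct, Finset.sum_apply, Finset.sum_mul]
  exact Finset.sum_comm

/-- If the linear objective `c ⬝ᵥ x` is nonpositive on the recession cone of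
`{x | A x ≤ b, 0 ≤ x}`, then it is bounded above on that polyhedron. -/
lemma farkas_bound {m n : ℕ} (A : Matrix (Fin m) (Fin n) ℝ) (b : Fin m → ℝ)
    (c : Fin n → ℝ)
    (h : ∀ x : Fin n → ℝ, 0 ≤ x → A.mulVec x ≤ 0 → c ⬝ᵥ x ≤ 0) :
    ∃ M : ℝ, ∀ x : Fin n → ℝ, 0 ≤ x → A.mulVec x ≤ b → c ⬝ᵥ x ≤ M := by
  set v : Fin (m + n) → Fin n → ℝ :=
    Fin.append (fun i => A i) (fun j => -(Pi.single j 1 : Fin n → ℝ)) with hv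
  by_cases hmem : ∃ μ : Fin (m + n) → ℝ, (∀ i, 0 ≤ μ i) ∧ c = ∑ i, μ i • v i
  · obtain ⟨μ, hμ, hc⟩ := hmem
    refine ⟨∑ i, μ (Fin.castAdd n i) * b i, ?_⟩
    intro x hx hAx
    have hsplit : c = (∑ i : Fin m, μ (Fin.castAdd n i) • A i)
        + ∑ j : Fin n, μ (Fin.natAdd m j) • (-(Pi.single j 1 : Fin n → ℝ)) := by
      rw [hc, Fin.sum_univ_add]
      congr 1
      · exact Finset.sum_congr rfl fun i _ => by rw [hv, Fin.append_left]
      · exact Finset.sum_congr rfl fun j _ => by rw [hv, Fin.append_right]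
    have hcalc : c ⬝ᵥ x = (∑ i : Fin m, μ (Fin.castAdd n i) * (A.mulVec x i))
        - ∑ j : Fin n, μ (Fin.natAdd m j) * x j := by
      rw [hsplit, add_dotProduct, sum_dotProduct', sum_dotProduct',
        sub_eq_add_neg]
      congr 1
      · exact Finset.sum_congr rfl fun i _ => by
          rw [smul_dotProduct, smul_eq_mul]; rfl
      · rw [← Finset.sum_neg_distrib]
        refine Finset.sum_congr rfl fun j _ => ?_
        rw [smul_dotProduct, neg_dotProduct, single_dotProduct,
          smul_eq_mul, one_mul]
        ring
    rw [hcalc]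
    have h1 : ∑ i : Fin m, μ (Fin.castAdd n i) * (A.mulVec x i)
        ≤ ∑ i, μ (Fin.castAdd n i) * b i :=
      Finset.sum_le_sum fun i _ => mul_le_mul_of_nonneg_left (hAx i) (hμ _)
    have h2 : 0 ≤ ∑ j : Fin n, μ (Fin.natAdd m j) * x j :=
      Finset.sum_nonneg fun j _ => mul_nonneg (hμ _) (hx j)
    linarith
  · exfalso
    obtain ⟨d, hd, hdc⟩ := farkas_sep n (m + n) v c hmem
    have hxpos : 0 ≤ -d := by
      intro j
      have hj := hd (Fin.natAdd m j)
      rw [hv, Fin.append_right] at hj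
      simpa [dotProduct_neg, dotProduct_single] using hj
    have hAd : A.mulVec (-d) ≤ 0 := by
      intro i
      have hi := hd (Fin.castAdd n i)
      rw [hv, Fin.append_left] at hi
      have hAdi : A.mulVec d i = d ⬝ᵥ A i := by
        rw [Matrix.mulVec]; exact dotProduct_comm _ _
      rw [Matrix.mulVec_neg]
      simp only [Pi.neg_apply, Pi.zero_apply, neg_nonpos]
      rw [hAdi]
      exact hi
    have hcd := h (-d) hxpos hAd
    rw [dotProduct_neg, dotProduct_comm] at hcd
    linarith

/-- Proposition 3.5: the negative dual cone of the recession cone Pᵀ[Xʰ] − C of the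
lower image consists exactly of those w ∈ C⁺ for which the scalarized objective
is bounded above on X. -/
theorem neg_dual_recession_eq_bounded_weights
    (n m q : ℕ) (hn : 0 < n) (hm : 0 < m) (hq : 0 < q)
    (P : Matrix (Fin n) (Fin q) ℝ) (A : Matrix (Fin m) (Fin n) ℝ) (b : Fin m → ℝ)
    (C : Set (Fin q → ℝ))
    (hC0 : {(0 : Fin q → ℝ)} ⊂ C) (hCuniv : C ≠ Set.univ)
    (hCpoly : ∃ (k : ℕ) (Y : Fin k → Fin q → ℝ),
      C = {v | ∃ μ : Fin k → ℝ, (∀ i, 0 ≤ μ i) ∧ v = ∑ i, μ i • Y i})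
    (hCpointed : ∀ v ∈ C, -v ∈ C → v = 0)
    (hCsolid : (interior C).Nonempty)
    (X : Set (Fin n → ℝ)) (hX : X = {x | A.mulVec x ≤ b ∧ 0 ≤ x})
    (Xh : Set (Fin n → ℝ)) (hXh : Xh = {x | A.mulVec x ≤ 0 ∧ 0 ≤ x})
    (hXne : X.Nonempty) :
    {w : Fin q → ℝ |
        ∀ v ∈ {v : Fin q → ℝ | ∃ x ∈ Xh, ∃ c ∈ C, v = P.transpose.mulVec x - c},
          w ⬝ᵥ v ≤ 0}
      = {w : Fin q → ℝ | (∀ y ∈ C, 0 ≤ w ⬝ᵥ y) ∧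
          ∃ M : ℝ, ∀ x ∈ X, w ⬝ᵥ P.transpose.mulVec x ≤ M} := by
  have h0C : (0 : Fin q → ℝ) ∈ C := hC0.subset (Set.mem_singleton 0)
  ext w
  simp only [Set.mem_setOf_eq]
  constructor
  · intro hw
    have hzero : (0 : Fin n → ℝ) ∈ Xh := by
      rw [hXh]
      exact ⟨by rw [Matrix.mulVec_zero], le_refl 0⟩
    constructor
    · intro y hy
      have := hw (P.transpose.mulVec 0 - y) ⟨0, hzero, y, hy, rfl⟩
      rw [Matrix.mulVec_zero, zero_sub, dotProduct_neg] at this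
      linarith
    · have key : ∀ x : Fin n → ℝ, 0 ≤ x → A.mulVec x ≤ 0 →
          (w ᵥ* P.transpose) ⬝ᵥ x ≤ 0 := by
        intro x hx hAx
        have hxXh : x ∈ Xh := by rw [hXh]; exact ⟨hAx, hx⟩
        have := hw (P.transpose.mulVec x - 0) ⟨x, hxXh, 0, h0C, rfl⟩
        rw [sub_zero] at this
        rw [← Matrix.dotProduct_mulVec]
        exact this
      obtain ⟨M, hM⟩ := farkas_bound A b (w ᵥ* P.transpose) key
      refine ⟨M, ?_⟩
      intro x hxX
      rw [hX] at hxX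
      rw [Matrix.dotProduct_mulVec]
      exact hM x hxX.2 hxX.1
  · rintro ⟨hwC, M, hM⟩ v ⟨x, hxXh, cc, hcc, rfl⟩
    rw [hXh] at hxXh
    have hwcc : 0 ≤ w ⬝ᵥ cc := hwC cc hcc
    have hobj : w ⬝ᵥ P.transpose.mulVec x ≤ 0 := by
      by_contra hpos
      push_neg at hpos
      obtain ⟨x₀, hx₀⟩ := hXne
      have hx₀X := hx₀
      rw [hX] at hx₀
      set ε := w ⬝ᵥ P.transpose.mulVec x with hε
      set t : ℝ := max 0 ((M - w ⬝ᵥ P.transpose.mulVec x₀ + 1) / ε) with ht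
      have ht0 : 0 ≤ t := le_max_left _ _
      have hfeas : x₀ + t • x ∈ X := by
        rw [hX]
        constructor
        · intro i
          have h1 : A.mulVec (x₀ + t • x) i = A.mulVec x₀ i + t * A.mulVec x i := by
            rw [Matrix.mulVec_add, Matrix.mulVec_smul]; rfl
          rw [h1]
          have h2 : t * A.mulVec x i ≤ 0 :=
            mul_nonpos_iff.mpr (Or.inl ⟨ht0, hxXh.1 i⟩)
          have hb := hx₀.1 i
          exact le_trans (by linarith) (le_of_eq rfl)
        · intro i
          have h2 : 0 ≤ t * x i := mul_nonneg ht0 (hxXh.2 i)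
          have h3 := hx₀.2 i
          simp only [Pi.add_apply, Pi.smul_apply, smul_eq_mul, Pi.zero_apply] at *
          linarith
      have hMle := hM _ hfeas
      have hexp : w ⬝ᵥ P.transpose.mulVec (x₀ + t • x)
          = w ⬝ᵥ P.transpose.mulVec x₀ + t * ε := by
        rw [Matrix.mulVec_add, Matrix.mulVec_smul, dotProduct_add,
          dotProduct_smul, smul_eq_mul]
      have htge : (M - w ⬝ᵥ P.transpose.mulVec x₀ + 1) / ε ≤ t := le_max_right _ _
      have hte : M - w ⬝ᵥ P.transpose.mulVec x₀ + 1 ≤ t * ε := by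
        rw [div_le_iff₀ hpos] at htge
        linarith
      rw [hexp] at hMle
      linarith
    have hsub : w ⬝ᵥ (P.transpose.mulVec x - cc)
        = w ⬝ᵥ P.transpose.mulVec x - w ⬝ᵥ cc := dotProduct_sub _ _ _
    rw [hsub]
    linarith
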